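/- Suppose (ν̃, μ̃) is a global minimizer of L̃ over all pairs of functions S → ℝ. Set C := log ∑_s exp(−μ̃(s) − 1). Then the shifted pair (ν̃ + (C/(1−γ))·𝟙, μ̃ + C·𝟙) is a global minimizer of L, and the value of L at this shifted pair equals L̃(ν̃, μ̃). -/

import Mathlib

open scoped BigOperators

noncomputable def eFn {S A : Type*} [Fintype S] (γ : ℝ) (T : S → A → S → ℝ)
    (ν μ : S → ℝ) (s : S) (a : A) : ℝ :=
  μ s + γ * ∑ s', T s a s' * ν s' - ν s

noncomputable def Lobj {S A : Type*} [Fintype S] [Fintype A] (γ : ℝ) (p0 : S → ℝ)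
    (T : S → A → S → ℝ) (dD : S → A → ℝ) (α : ℝ) (φ : ℝ → ℝ) (ν μ : S → ℝ) : ℝ :=
  (1 - γ) * ∑ s, p0 s * ν s
    + ∑ s, ∑ a, dD s a * (α * φ (eFn γ T ν μ s a / α))
    + ∑ s, Real.exp (-μ s - 1)

noncomputable def Ltilde {S A : Type*} [Fintype S] [Fintype A] (γ : ℝ) (p0 : S → ℝ)
    (T : S → A → S → ℝ) (dD : S → A → ℝ) (α : ℝ) (φ : ℝ → ℝ) (ν μ : S → ℝ) : ℝ :=
  (1 - γ) * ∑ s, p0 s * ν s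
    + ∑ s, ∑ a, dD s a * (α * φ (eFn γ T ν μ s a / α))
    + Real.log (∑ s, Real.exp (-μ s))

theorem stmt2 {S A : Type*} [Fintype S] [Fintype A] [Nonempty S] [Nonempty A]
    (γ : ℝ) (hγ : γ ∈ Set.Ioo (0:ℝ) 1)
    (p0 : S → ℝ) (hp0 : ∀ s, 0 ≤ p0 s) (hp0sum : ∑ s, p0 s = 1)
    (T : S → A → S → ℝ) (hT : ∀ s a s', 0 ≤ T s a s')
    (hTsum : ∀ s a, ∑ s', T s a s' = 1)
    (dD : S → A → ℝ) (hdD : ∀ s a, 0 ≤ dD s a) (hdDsum : ∑ s, ∑ a, dD s a = 1)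
    (α : ℝ) (hα : 0 < α) (φ : ℝ → ℝ)
    (νt μt : S → ℝ)
    (hmin : ∀ ν μ : S → ℝ, Ltilde γ p0 T dD α φ νt μt ≤ Ltilde γ p0 T dD α φ ν μ)
    (C : ℝ) (hC : C = Real.log (∑ s, Real.exp (-μt s - 1))) :
    (∀ ν μ : S → ℝ,
        Lobj γ p0 T dD α φ (fun s => νt s + C / (1 - γ)) (fun s => μt s + C)
          ≤ Lobj γ p0 T dD α φ ν μ) ∧
      Lobj γ p0 T dD α φ (fun s => νt s + C / (1 - γ)) (fun s => μt s + C)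
        = Ltilde γ p0 T dD α φ νt μt := by
  obtain ⟨hγ0, hγ1'⟩ := hγ
  have h1γ : (1:ℝ) - γ ≠ 0 := by linarith
  have hsumpos1 : 0 < ∑ s, Real.exp (-μt s - 1) :=
    Finset.sum_pos (fun s _ => Real.exp_pos _) Finset.univ_nonempty
  have hexpC : Real.exp C = ∑ s, Real.exp (-μt s - 1) := by
    rw [hC, Real.exp_log hsumpos1]
  -- eFn invariance under the shift
  have he : ∀ (s : S) (a : A),
      eFn γ T (fun s => νt s + C / (1 - γ)) (fun s => μt s + C) s a
        = eFn γ T νt μt s a := by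
    intro s a
    simp only [eFn]
    have hs : ∑ s', T s a s' * (νt s' + C / (1 - γ))
        = (∑ s', T s a s' * νt s') + C / (1 - γ) := by
      simp only [mul_add, Finset.sum_add_distrib, ← Finset.sum_mul, hTsum s a, one_mul]
    rw [hs]
    field_simp
    ring
  -- log of sum relation
  have hClog : Real.log (∑ s, Real.exp (-μt s)) = C + 1 := by
    have hsum : (∑ s, Real.exp (-μt s - 1))
        = (∑ s, Real.exp (-μt s)) * Real.exp (-1) := by
      rw [Finset.sum_mul]
      refine Finset.sum_congr rfl fun s _ => ?_
      rw [← Real.exp_add]; ring_nf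
    have hxpos : 0 < ∑ s, Real.exp (-μt s) :=
      Finset.sum_pos (fun s _ => Real.exp_pos _) Finset.univ_nonempty
    have : C = Real.log ((∑ s, Real.exp (-μt s)) * Real.exp (-1)) := by
      rw [hC, hsum]
    rw [Real.log_mul (ne_of_gt hxpos) (Real.exp_ne_zero _), Real.log_exp] at this
    linarith
  -- equality of Lobj at shifted point with Ltilde at (νt, μt)
  have heq : Lobj γ p0 T dD α φ (fun s => νt s + C / (1 - γ)) (fun s => μt s + C)
      = Ltilde γ p0 T dD α φ νt μt := by
    simp only [Lobj, Ltilde]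
    have t1 : (1 - γ) * ∑ s, p0 s * (νt s + C / (1 - γ))
        = (1 - γ) * (∑ s, p0 s * νt s) + C := by
      have hs : ∑ s, p0 s * (νt s + C / (1 - γ))
          = (∑ s, p0 s * νt s) + C / (1 - γ) := by
        simp only [mul_add, Finset.sum_add_distrib, ← Finset.sum_mul, hp0sum, one_mul]
      rw [hs]; field_simp
    have t2 : ∑ s, ∑ a, dD s a * (α * φ
          (eFn γ T (fun s => νt s + C / (1 - γ)) (fun s => μt s + C) s a / α))
        = ∑ s, ∑ a, dD s a * (α * φ (eFn γ T νt μt s a / α)) := by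
      refine Finset.sum_congr rfl fun s _ => Finset.sum_congr rfl fun a _ => ?_
      rw [he s a]
    have t3 : ∑ s, Real.exp (-(μt s + C) - 1) = 1 := by
      have hs : ∀ s : S, Real.exp (-(μt s + C) - 1)
          = Real.exp (-μt s - 1) * Real.exp (-C) := by
        intro s; rw [← Real.exp_add]; ring_nf
      rw [Finset.sum_congr rfl (fun s _ => hs s), ← Finset.sum_mul,
        Real.exp_neg, hexpC]
      field_simp
    rw [t1, t2, t3, hClog]
    ring
  -- Lobj dominates Ltilde everywhere
  have hge : ∀ ν μ : S → ℝ,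
      Ltilde γ p0 T dD α φ ν μ ≤ Lobj γ p0 T dD α φ ν μ := by
    intro ν μ
    have hxpos : 0 < ∑ s, Real.exp (-μ s) :=
      Finset.sum_pos (fun s _ => Real.exp_pos _) Finset.univ_nonempty
    have hsum : (∑ s, Real.exp (-μ s - 1))
        = (∑ s, Real.exp (-μ s)) * Real.exp (-1) := by
      rw [Finset.sum_mul]
      refine Finset.sum_congr rfl fun s _ => ?_
      rw [← Real.exp_add]; ring_nf
    have hlt : Real.log (∑ s, Real.exp (-μ s)) ≤ ∑ s, Real.exp (-μ s - 1) := by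
      have h1 : Real.log ((∑ s, Real.exp (-μ s)) * Real.exp (-1))
          ≤ (∑ s, Real.exp (-μ s)) * Real.exp (-1) - 1 :=
        Real.log_le_sub_one_of_pos (by positivity)
      rw [Real.log_mul (ne_of_gt hxpos) (Real.exp_ne_zero _), Real.log_exp] at h1
      rw [hsum]
      linarith
    simp only [Lobj, Ltilde]
    linarith
  refine ⟨fun ν μ => ?_, heq⟩
  calc Lobj γ p0 T dD α φ (fun s => νt s + C / (1 - γ)) (fun s => μt s + C)
      = Ltilde γ p0 T dD α φ νt μt := heq
    _ ≤ Ltilde γ p0 T dD α φ ν μ := hmin ν μ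
    _ ≤ Lobj γ p0 T dD α φ ν μ := hge ν μ
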